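/- Let (M; ∨, ∧, ⊕, ⊖, 0) be a wEMV-algebra without a top element. Then there exist a wEMV-algebra (N; ∨, ∧, ⊕, ⊖, 0) with a greatest element 1 and an injective map f : M → N preserving ∨, ∧, ⊕, ⊖ and 0, such that the image f(M) is a maximal ideal of N and every element of N is either equal to f(x) for some x ∈ M or equal to 1 ⊖ f(x) for some x ∈ M. -/

import Mathlib

universe u

class WEMV (M : Type u) extends DistribLattice M, Zero M where
  oplus : M → M → M
  ominus : M → M → M
  zero_le : ∀ x : M, 0 ≤ x
  oplus_comm : ∀ x y : M, oplus x y = oplus y x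
  oplus_assoc : ∀ x y z : M, oplus (oplus x y) z = oplus x (oplus y z)
  oplus_zero : ∀ x : M, oplus x 0 = x
  ominus_oplus_le : ∀ x y : M, ominus (oplus x y) x ≤ y
  oplus_ominus : ∀ x y : M, oplus x (ominus y x) = x ⊔ y
  ominus_inf : ∀ x y : M, ominus x (x ⊓ y) = ominus x y
  ominus_ominus : ∀ x z : M, ominus z (ominus z x) = x ⊓ z
  ominus_sup : ∀ x y z : M, ominus z (x ⊔ y) = ominus z x ⊓ ominus z y
  inf_ominus : ∀ x y z : M, ominus (x ⊓ y) z = ominus x z ⊓ ominus y z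
  ominus_oplus_assoc : ∀ x y z : M, ominus x (oplus y z) = ominus (ominus x y) z
  oplus_sup : ∀ x y z : M, oplus x (y ⊔ z) = oplus x y ⊔ oplus x z

open WEMV

def IsWEMVEmbedding {M : Type u} [WEMV M] {N : Type u} [WEMV N] (f : M → N) : Prop :=
  Function.Injective f ∧ f 0 = 0 ∧
  (∀ x y : M, f (x ⊔ y) = f x ⊔ f y) ∧
  (∀ x y : M, f (x ⊓ y) = f x ⊓ f y) ∧
  (∀ x y : M, f (oplus x y) = oplus (f x) (f y)) ∧
  (∀ x y : M, f (ominus x y) = ominus (f x) (f y))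

def IsIdeal {N : Type u} [WEMV N] (I : Set N) : Prop :=
  I.Nonempty ∧ (∀ x y : N, y ≤ x → x ∈ I → y ∈ I) ∧ ∀ x ∈ I, ∀ y ∈ I, oplus x y ∈ I

def IsMaximalIdeal {N : Type u} [WEMV N] (I : Set N) : Prop :=
  IsIdeal I ∧ I ≠ Set.univ ∧
  ∀ J : Set N, IsIdeal J → J ≠ Set.univ → I ⊆ J → I = J

def IsGreatestElt {N : Type u} [WEMV N] (one : N) : Prop := ∀ y : N, y ≤ one

namespace WEMVAux

variable {M : Type u} [WEMV M]

lemma zero_oplus (x : M) : oplus 0 x = x := by rw [oplus_comm, oplus_zero]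

lemma oplus_le_right {b c : M} (h : b ≤ c) (a : M) : oplus a b ≤ oplus a c := by
  have : oplus a c = oplus a b ⊔ oplus a c := by
    rw [← oplus_sup, sup_eq_right.2 h]
  rw [this]; exact le_sup_left

lemma oplus_le_left {a b : M} (h : a ≤ b) (c : M) : oplus a c ≤ oplus b c := by
  rw [oplus_comm a c, oplus_comm b c]; exact oplus_le_right h c

lemma le_oplus_self (a b : M) : a ≤ oplus a b := by
  have := oplus_le_right (WEMV.zero_le b) a
  rwa [oplus_zero] at this

lemma le_oplus_self' (a b : M) : b ≤ oplus a b := by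
  rw [oplus_comm]; exact le_oplus_self b a

lemma ominus_self (a : M) : ominus a a = 0 := by
  have h := ominus_oplus_le a (0 : M)
  rw [oplus_zero] at h
  exact le_antisymm h (WEMV.zero_le _)

lemma ominus_zero (a : M) : ominus a 0 = a := by
  have h := ominus_ominus a a
  rw [ominus_self, inf_idem] at h
  exact h

lemma zero_ominus (a : M) : ominus 0 a = 0 := by
  have h := inf_ominus (0 : M) a a
  rw [ominus_self, inf_eq_left.2 (WEMV.zero_le a)] at h
  have : ominus (0:M) a ≤ 0 := by rw [h]; exact inf_le_right
  exact le_antisymm this (WEMV.zero_le _)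

lemma ominus_le_left {a b : M} (h : a ≤ b) (c : M) : ominus a c ≤ ominus b c := by
  have := inf_ominus a b c
  rw [inf_eq_left.2 h] at this
  rw [this]; exact inf_le_right

lemma ominus_le_right {b c : M} (h : b ≤ c) (a : M) : ominus a c ≤ ominus a b := by
  have := ominus_sup b c a
  rw [sup_eq_right.2 h] at this
  rw [this]; exact inf_le_left

lemma ominus_le_iff {x y z : M} : ominus x y ≤ z ↔ x ≤ oplus y z := by
  constructor
  · intro h
    calc x ≤ y ⊔ x := le_sup_right
    _ = oplus y (ominus x y) := (oplus_ominus y x).symm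
    _ ≤ oplus y z := oplus_le_right h y
  · intro h
    calc ominus x y ≤ ominus (oplus y z) y := ominus_le_left h y
    _ ≤ z := ominus_oplus_le y z

lemma ominus_le_self (a b : M) : ominus a b ≤ a :=
  ominus_le_iff.2 (le_oplus_self' b a)

lemma ominus_eq_zero_of_le {a b : M} (h : a ≤ b) : ominus a b = 0 := by
  have h1 := ominus_inf a b
  rw [inf_eq_left.2 h, ominus_self] at h1
  exact h1.symm

lemma le_of_ominus_eq_zero {a b : M} (h : ominus a b = 0) : a ≤ b := by
  have : ominus a b ≤ 0 := le_of_eq h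
  have := ominus_le_iff.1 this
  rwa [oplus_zero] at this

lemma sup_ominus (x y z : M) : ominus (x ⊔ y) z = ominus x z ⊔ ominus y z := by
  apply le_antisymm
  · apply ominus_le_iff.2
    apply sup_le
    · calc x ≤ z ⊔ x := le_sup_right
      _ = oplus z (ominus x z) := (oplus_ominus z x).symm
      _ ≤ oplus z (ominus x z ⊔ ominus y z) := oplus_le_right le_sup_left z
    · calc y ≤ z ⊔ y := le_sup_right
      _ = oplus z (ominus y z) := (oplus_ominus z y).symm
      _ ≤ oplus z (ominus x z ⊔ ominus y z) := oplus_le_right le_sup_right z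
  · exact sup_le (ominus_le_left le_sup_left z) (ominus_le_left le_sup_right z)

lemma oplus_inf (a b c : M) : oplus a (b ⊓ c) = oplus a b ⊓ oplus a c := by
  apply le_antisymm
  · exact le_inf (oplus_le_right inf_le_left a) (oplus_le_right inf_le_right a)
  · apply ominus_le_iff.1
    rw [inf_ominus]
    exact inf_le_inf (ominus_oplus_le a b) (ominus_oplus_le a c)

lemma ominus_inf_right (x y z : M) : ominus x (y ⊓ z) = ominus x y ⊔ ominus x z := by
  apply le_antisymm
  · apply ominus_le_iff.2
    rw [oplus_comm, oplus_inf]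
    apply le_inf
    · calc x ≤ y ⊔ x := le_sup_right
      _ = oplus y (ominus x y) := (oplus_ominus y x).symm
      _ ≤ oplus y (ominus x y ⊔ ominus x z) := oplus_le_right le_sup_left y
      _ = oplus (ominus x y ⊔ ominus x z) y := oplus_comm _ _
    · calc x ≤ z ⊔ x := le_sup_right
      _ = oplus z (ominus x z) := (oplus_ominus z x).symm
      _ ≤ oplus z (ominus x y ⊔ ominus x z) := oplus_le_right le_sup_right z
      _ = oplus (ominus x y ⊔ ominus x z) z := oplus_comm _ _
  · exact sup_le (ominus_le_right inf_le_left x) (ominus_le_right inf_le_right x)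

/-- `dd a b` is the "interior" `(b ⊕ a) ⊖ a`; in MV-algebras it is `b ∧ ¬a`. -/
def dd (a b : M) : M := ominus (oplus b a) a

/-- `rr a b` is the MV product `a ⊙ b`. -/
def rr (a b : M) : M := ominus a (dd b a)

lemma dd_le (a b : M) : dd a b ≤ b := by
  have := ominus_oplus_le a b
  rw [dd, oplus_comm]; exact this

lemma oplus_dd (a b : M) : oplus a (dd a b) = oplus a b := by
  rw [dd, oplus_ominus a (oplus b a)]
  rw [sup_eq_right.2 (le_oplus_self' b a), oplus_comm]

lemma dd_zero_left (a : M) : dd 0 a = a := by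
  rw [dd, oplus_zero, ominus_zero]

lemma dd_zero_right (a : M) : dd a 0 = 0 := by
  rw [dd, zero_oplus, ominus_self]

lemma dd_char {a b u : M} : dd a b ≤ u ↔ oplus a b ≤ oplus a u := by
  constructor
  · intro h
    calc oplus a b = oplus a (dd a b) := (oplus_dd a b).symm
    _ ≤ oplus a u := oplus_le_right h a
  · intro h
    rw [oplus_comm a b, oplus_comm a u] at h
    calc dd a b = ominus (oplus b a) a := rfl
    _ ≤ ominus (oplus u a) a := ominus_le_left h a
    _ ≤ u := by rw [oplus_comm]; exact ominus_oplus_le a u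

/-- Key lemma: the interior operator evaluated below `y`. -/
lemma dd_of_le {x y : M} (b : M) (h : x ≤ y) : dd b x = x ⊓ dd b y := by
  set z := oplus y b with hz
  have h0 : ominus z b = dd b y := rfl
  have h1 : oplus x b ≤ z := oplus_le_left h b
  have h2 : ominus z (oplus b x) = ominus (dd b y) x := by
    rw [ominus_oplus_assoc]; rfl
  have h3 : ominus z (ominus z (oplus x b)) = oplus x b := by
    rw [ominus_ominus]; exact inf_eq_left.2 h1
  have h4 : ominus z (oplus x b) = ominus (dd b y) x := by
    rw [oplus_comm x b]; exact h2
  calc dd b x = ominus (oplus x b) b := rfl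
  _ = ominus (ominus z (ominus z (oplus x b))) b := by rw [h3]
  _ = ominus (ominus z (ominus (dd b y) x)) b := by rw [h4]
  _ = ominus z (oplus (ominus (dd b y) x) b) := (ominus_oplus_assoc _ _ _).symm
  _ = ominus z (oplus b (ominus (dd b y) x)) := by rw [oplus_comm]
  _ = ominus (ominus z b) (ominus (dd b y) x) := ominus_oplus_assoc _ _ _
  _ = ominus (dd b y) (ominus (dd b y) x) := by rw [h0]
  _ = x ⊓ dd b y := ominus_ominus _ _

lemma dd_fix {x y b : M} (h : x ≤ ominus y b) : dd b x = x := by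
  have h1 : dd b (ominus y b) = ominus y b := by
    calc dd b (ominus y b) = ominus (oplus (ominus y b) b) b := rfl
    _ = ominus (oplus b (ominus y b)) b := by rw [oplus_comm]
    _ = ominus (b ⊔ y) b := by rw [oplus_ominus]
    _ = ominus b b ⊔ ominus y b := sup_ominus _ _ _
    _ = ominus y b := by rw [ominus_self]; exact sup_eq_right.2 (WEMV.zero_le _)
  rw [dd_of_le b h, h1, inf_eq_left.2 h]

lemma dd_mono {x y : M} (b : M) (h : x ≤ y) : dd b x ≤ dd b y := by
  rw [dd_of_le b h]; exact inf_le_right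

lemma dd_anti {a b : M} (c : M) (h : a ≤ b) : dd b c ≤ dd a c := by
  have h1 : dd b c ≤ ominus (oplus c b) a := by
    have : dd b c = ominus (oplus c b) (a ⊔ b) := by
      rw [sup_eq_right.2 h]; rfl
    rw [this, ominus_sup]; exact inf_le_left
  have h2 : dd a (dd b c) = dd b c := dd_fix h1
  calc dd b c = dd a (dd b c) := h2.symm
  _ ≤ dd a c := dd_mono a (dd_le b c)

lemma dd_dd (a b c : M) : dd a (dd b c) = dd b c ⊓ dd a c :=
  dd_of_le a (dd_le b c)

lemma dd_sup_left (a b c : M) : dd (a ⊔ b) c = dd a c ⊓ dd b c := by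
  apply le_antisymm
  · exact le_inf (dd_anti c le_sup_left) (dd_anti c le_sup_right)
  · set s := dd a c ⊓ dd b c with hs
    have hsa : dd a s = s := dd_fix (le_trans inf_le_left (le_of_eq rfl))
    have hsb : dd b s = s := dd_fix (le_trans inf_le_right (le_of_eq rfl))
    have key : s ≤ dd (a ⊔ b) s := by
      have : dd (a ⊔ b) s = ominus (oplus s a ⊔ oplus s b) a ⊓ ominus (oplus s a ⊔ oplus s b) b := by
        calc dd (a ⊔ b) s = ominus (oplus s (a ⊔ b)) (a ⊔ b) := rfl
        _ = ominus (oplus s a ⊔ oplus s b) (a ⊔ b) := by rw [oplus_sup]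
        _ = _ := ominus_sup _ _ _
      rw [this]
      apply le_inf
      · calc s = dd a s := hsa.symm
        _ = ominus (oplus s a) a := rfl
        _ ≤ ominus (oplus s a ⊔ oplus s b) a := ominus_le_left le_sup_left a
      · calc s = dd b s := hsb.symm
        _ = ominus (oplus s b) b := rfl
        _ ≤ ominus (oplus s a ⊔ oplus s b) b := ominus_le_left le_sup_right b
    calc s ≤ dd (a ⊔ b) s := key
    _ ≤ dd (a ⊔ b) c := dd_mono _ (le_trans inf_le_left (dd_le a c))

lemma dd_inf (a b c : M) : dd a (b ⊓ c) = dd a b ⊓ c := by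
  rw [dd_of_le a (inf_le_left : b ⊓ c ≤ b)]
  rw [inf_comm b c, inf_assoc, inf_eq_right.2 (dd_le a b), inf_comm]

lemma dd_inf' (a b c : M) : dd a (b ⊓ c) = b ⊓ dd a c := by
  rw [inf_comm b c, dd_inf, inf_comm]

lemma dd_sup_right (a b c : M) : dd a (b ⊔ c) = dd a b ⊔ dd a c := by
  calc dd a (b ⊔ c) = ominus (oplus (b ⊔ c) a) a := rfl
  _ = ominus (oplus a (b ⊔ c)) a := by rw [oplus_comm]
  _ = ominus (oplus a b ⊔ oplus a c) a := by rw [oplus_sup]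
  _ = ominus (oplus a b) a ⊔ ominus (oplus a c) a := sup_ominus _ _ _
  _ = dd a b ⊔ dd a c := by rw [dd, dd, oplus_comm a b, oplus_comm a c]

lemma dd_dd_self (a b : M) : dd (dd a b) a = a := by
  have h1 : ominus (oplus a b) a = dd a b := by rw [dd, oplus_comm]
  calc dd (dd a b) a = ominus (oplus a (dd a b)) (dd a b) := rfl
  _ = ominus (oplus a b) (dd a b) := by rw [oplus_dd]
  _ = ominus (oplus a b) (ominus (oplus a b) a) := by rw [h1]
  _ = a ⊓ oplus a b := ominus_ominus _ _
  _ = a := inf_eq_left.2 (le_oplus_self a b)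

lemma ominus_oplus_dd (a b : M) : ominus (oplus a b) (dd a b) = a := by
  have h1 : ominus (oplus a b) a = dd a b := by rw [dd, oplus_comm]
  rw [← h1, ominus_ominus, inf_eq_left.2 (le_oplus_self a b)]

lemma rr_comm (a b : M) : rr a b = rr b a := by
  have e1 : ominus (oplus a b) (oplus (dd a b) (dd b a)) = rr a b := by
    rw [ominus_oplus_assoc, ominus_oplus_dd, rr]
  have e2 : ominus (oplus a b) (oplus (dd a b) (dd b a)) = rr b a := by
    rw [oplus_comm (dd a b) (dd b a), ominus_oplus_assoc]
    have : ominus (oplus a b) (dd b a) = b := by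
      rw [oplus_comm]; exact ominus_oplus_dd b a
    rw [this, rr]
  rw [← e1, e2]

lemma rr_le_left (a b : M) : rr a b ≤ a := ominus_le_self _ _

lemma rr_le_right (a b : M) : rr a b ≤ b := by rw [rr_comm]; exact rr_le_left b a

lemma ominus_rr (a b : M) : ominus a (rr a b) = dd b a := by
  rw [rr, ominus_ominus, inf_eq_left.2 (dd_le b a)]


/-- The main structural identity: `dd (dd b c) a = (a ⊓ b) ⊔ dd c a`.
In MV terms: `a ∧ ¬(c ∧ ¬b) = (a ∧ b) ∨ (a ∧ ¬c)`. -/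
lemma dd_first (a b c : M) : dd (dd b c) a = (a ⊓ b) ⊔ dd c a := by
  set q := dd b c with hq
  have hb : ominus (oplus c b) q = b := by
    have h1 : ominus (oplus c b) b = q := rfl
    rw [← h1, ominus_ominus, inf_eq_left.2 (le_oplus_self' c b)]
  apply le_antisymm
  · set x := dd q a with hx
    have hfix : dd q x = x := dd_fix (le_of_eq (rfl : x = ominus (oplus a q) q))
    have s1 : x ≤ ominus (oplus x c) q := by
      calc x = dd q x := hfix.symm
      _ = ominus (oplus x q) q := rfl
      _ ≤ ominus (oplus x c) q := ominus_le_left (oplus_le_right (dd_le b c) x) q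
    have s2 : ominus x b ≤ ominus (dd c x) b := by
      calc ominus x b ≤ ominus (ominus (oplus x c) q) b := ominus_le_left s1 b
      _ = ominus (oplus x c) (oplus q b) := (ominus_oplus_assoc _ _ _).symm
      _ = ominus (oplus x c) (oplus b q) := by rw [oplus_comm q b]
      _ = ominus (oplus x c) (oplus b c) := by rw [hq, oplus_dd]
      _ = ominus (oplus x c) (oplus c b) := by rw [oplus_comm b c]
      _ = ominus (ominus (oplus x c) c) b := ominus_oplus_assoc _ _ _
      _ = ominus (dd c x) b := rfl
    have s3 : x ≤ b ⊔ dd c a := by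
      calc x ≤ b ⊔ x := le_sup_right
      _ = oplus b (ominus x b) := (oplus_ominus b x).symm
      _ ≤ oplus b (ominus (dd c x) b) := oplus_le_right s2 b
      _ = b ⊔ dd c x := oplus_ominus b (dd c x)
      _ ≤ b ⊔ dd c a := sup_le_sup_left (dd_mono c (dd_le q a)) b
    calc x ≤ a ⊓ (b ⊔ dd c a) := le_inf (dd_le q a) s3
    _ = (a ⊓ b) ⊔ (a ⊓ dd c a) := inf_sup_left a b (dd c a)
    _ = (a ⊓ b) ⊔ dd c a := by rw [inf_eq_right.2 (dd_le c a)]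
  · apply sup_le
    · have h1 : a ⊓ b ≤ ominus (oplus c b) q := by rw [hb]; exact inf_le_right
      have h2 : dd q (a ⊓ b) = a ⊓ b := dd_fix h1
      calc a ⊓ b = dd q (a ⊓ b) := h2.symm
      _ ≤ dd q a := dd_mono q inf_le_left
    · exact dd_anti a (dd_le b c)

lemma dd_inf_left (a b c : M) : dd (b ⊓ c) a = dd b a ⊔ dd c a := by
  apply le_antisymm
  · set x := dd (b ⊓ c) a with hx
    have hfix : dd (b ⊓ c) x = x := dd_fix (le_of_eq (rfl : x = ominus (oplus a (b ⊓ c)) (b ⊓ c)))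
    set X := oplus x b ⊓ oplus x c with hX
    have h1 : x = ominus X b ⊔ ominus X c := by
      calc x = dd (b ⊓ c) x := hfix.symm
      _ = ominus (oplus x (b ⊓ c)) (b ⊓ c) := rfl
      _ = ominus X (b ⊓ c) := by rw [hX, oplus_inf]
      _ = ominus X b ⊔ ominus X c := ominus_inf_right _ _ _
    have h2 : ominus X b ≤ dd b a := by
      calc ominus X b ≤ ominus (oplus x b) b := ominus_le_left inf_le_left b
      _ = dd b x := rfl
      _ ≤ dd b a := dd_mono b (dd_le _ a)
    have h3 : ominus X c ≤ dd c a := by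
      calc ominus X c ≤ ominus (oplus x c) c := ominus_le_left inf_le_right c
      _ = dd c x := rfl
      _ ≤ dd c a := dd_mono c (dd_le _ a)
    rw [h1]; exact sup_le (h2.trans le_sup_left) (h3.trans le_sup_right)
  · exact sup_le (dd_anti a inf_le_left) (dd_anti a inf_le_right)

lemma rr_dd (a b c : M) : rr a (dd b c) = ominus a b ⊓ rr a c := by
  calc rr a (dd b c) = ominus a (dd (dd b c) a) := rfl
  _ = ominus a ((a ⊓ b) ⊔ dd c a) := by rw [dd_first]
  _ = ominus a (a ⊓ b) ⊓ ominus a (dd c a) := ominus_sup _ _ _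
  _ = ominus a b ⊓ rr a c := by rw [ominus_inf]; rfl

lemma rr_inf (a b c : M) : rr a (b ⊓ c) = rr a b ⊓ rr a c := by
  calc rr a (b ⊓ c) = ominus a (dd (b ⊓ c) a) := rfl
  _ = ominus a (dd b a ⊔ dd c a) := by rw [dd_inf_left]
  _ = ominus a (dd b a) ⊓ ominus a (dd c a) := ominus_sup _ _ _
  _ = rr a b ⊓ rr a c := rfl

lemma dd_ominus (a b c : M) : dd (oplus a b) (ominus c a) = ominus (dd b c) a := by
  have h1 : oplus (ominus c a) (oplus a b) = oplus b a ⊔ oplus b c := by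
    calc oplus (ominus c a) (oplus a b) = oplus (oplus (ominus c a) a) b := (oplus_assoc _ _ _).symm
    _ = oplus (oplus a (ominus c a)) b := by rw [oplus_comm (ominus c a) a]
    _ = oplus (a ⊔ c) b := by rw [oplus_ominus]
    _ = oplus b (a ⊔ c) := oplus_comm _ _
    _ = oplus b a ⊔ oplus b c := oplus_sup _ _ _
  calc dd (oplus a b) (ominus c a) = ominus (oplus (ominus c a) (oplus a b)) (oplus a b) := rfl
  _ = ominus (oplus b a ⊔ oplus b c) (oplus a b) := by rw [h1]
  _ = ominus (oplus b a) (oplus a b) ⊔ ominus (oplus b c) (oplus a b) := sup_ominus _ _ _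
  _ = ominus (oplus b c) (oplus a b) := by
      rw [oplus_comm b a, ominus_self]
      exact sup_eq_right.2 (WEMV.zero_le _)
  _ = ominus (oplus b c) (oplus b a) := by rw [oplus_comm a b]
  _ = ominus (ominus (oplus b c) b) a := ominus_oplus_assoc _ _ _
  _ = ominus (dd b c) a := by rw [dd, oplus_comm b c]

lemma rr_ominus (a b c : M) : rr (ominus b a) c = ominus (rr b c) a := by
  have h1 : dd c (ominus b a) = ominus b a ⊓ dd c b := dd_of_le c (ominus_le_self b a)
  calc rr (ominus b a) c = ominus (ominus b a) (dd c (ominus b a)) := rfl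
  _ = ominus (ominus b a) (ominus b a ⊓ dd c b) := by rw [h1]
  _ = ominus (ominus b a) (dd c b) := ominus_inf _ _
  _ = ominus b (oplus a (dd c b)) := (ominus_oplus_assoc _ _ _).symm
  _ = ominus b (oplus (dd c b) a) := by rw [oplus_comm]
  _ = ominus (ominus b (dd c b)) a := ominus_oplus_assoc _ _ _
  _ = ominus (rr b c) a := rfl

lemma rr_ominus' (a b c : M) : rr a (ominus c b) = rr (ominus a b) c := by
  calc rr a (ominus c b) = rr (ominus c b) a := rr_comm _ _
  _ = ominus (rr c a) b := rr_ominus b c a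
  _ = ominus (rr a c) b := by rw [rr_comm]
  _ = rr (ominus a b) c := (rr_ominus b a c).symm

lemma rr_assoc (a b c : M) : rr (rr a b) c = rr a (rr b c) := by
  have lhs1 : rr (rr a b) c = ominus b (oplus (dd a b) (dd c b)) := by
    have h1 : dd c (rr a b) = rr a b ⊓ dd c b := dd_of_le c (rr_le_right a b)
    calc rr (rr a b) c = ominus (rr a b) (dd c (rr a b)) := rfl
    _ = ominus (rr a b) (rr a b ⊓ dd c b) := by rw [h1]
    _ = ominus (rr a b) (dd c b) := ominus_inf _ _
    _ = ominus (rr b a) (dd c b) := by rw [rr_comm]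
    _ = ominus (ominus b (dd a b)) (dd c b) := rfl
    _ = ominus b (oplus (dd a b) (dd c b)) := (ominus_oplus_assoc _ _ _).symm
  have rhs1 : rr a (rr b c) = ominus b (oplus (dd c b) (dd a b)) := by
    have h1 : dd a (rr b c) = rr b c ⊓ dd a b := dd_of_le a (rr_le_left b c)
    calc rr a (rr b c) = rr (rr b c) a := rr_comm _ _
    _ = ominus (rr b c) (dd a (rr b c)) := rfl
    _ = ominus (rr b c) (rr b c ⊓ dd a b) := by rw [h1]
    _ = ominus (rr b c) (dd a b) := ominus_inf _ _
    _ = ominus (ominus b (dd c b)) (dd a b) := rfl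
    _ = ominus b (oplus (dd c b) (dd a b)) := (ominus_oplus_assoc _ _ _).symm
  rw [lhs1, rhs1, oplus_comm]


inductive NN (M : Type u) : Type u
  | lo : M → NN M
  | hi : M → NN M

namespace NN

variable {M : Type u} [WEMV M]

def nsup : NN M → NN M → NN M
  | lo a, lo b => lo (a ⊔ b)
  | lo a, hi b => hi (dd a b)
  | hi a, lo b => hi (dd b a)
  | hi a, hi b => hi (a ⊓ b)

def ninf : NN M → NN M → NN M
  | lo a, lo b => lo (a ⊓ b)
  | lo a, hi b => lo (dd b a)
  | hi a, lo b => lo (dd a b)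
  | hi a, hi b => hi (a ⊔ b)

def nplus : NN M → NN M → NN M
  | lo a, lo b => lo (oplus a b)
  | lo a, hi b => hi (ominus b a)
  | hi a, lo b => hi (ominus a b)
  | hi a, hi b => hi (rr a b)

def nminus : NN M → NN M → NN M
  | lo a, lo b => lo (ominus a b)
  | lo a, hi b => lo (rr a b)
  | hi a, lo b => hi (oplus a b)
  | hi a, hi b => lo (ominus b a)

instance : Max (NN M) := ⟨nsup⟩
instance : Min (NN M) := ⟨ninf⟩

@[simp] lemma lo_sup_lo (a b : M) : (lo a : NN M) ⊔ lo b = lo (a ⊔ b) := rfl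
@[simp] lemma lo_sup_hi (a b : M) : (lo a : NN M) ⊔ hi b = hi (dd a b) := rfl
@[simp] lemma hi_sup_lo (a b : M) : (hi a : NN M) ⊔ lo b = hi (dd b a) := rfl
@[simp] lemma hi_sup_hi (a b : M) : (hi a : NN M) ⊔ hi b = hi (a ⊓ b) := rfl
@[simp] lemma lo_inf_lo (a b : M) : (lo a : NN M) ⊓ lo b = lo (a ⊓ b) := rfl
@[simp] lemma lo_inf_hi (a b : M) : (lo a : NN M) ⊓ hi b = lo (dd b a) := rfl
@[simp] lemma hi_inf_lo (a b : M) : (hi a : NN M) ⊓ lo b = lo (dd a b) := rfl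
@[simp] lemma hi_inf_hi (a b : M) : (hi a : NN M) ⊓ hi b = hi (a ⊔ b) := rfl

private lemma nsup_comm : ∀ x y : NN M, x ⊔ y = y ⊔ x
  | lo a, lo b => by simp [sup_comm]
  | lo a, hi b => rfl
  | hi a, lo b => rfl
  | hi a, hi b => by simp [inf_comm]

private lemma nsup_assoc : ∀ x y z : NN M, x ⊔ y ⊔ z = x ⊔ (y ⊔ z)
  | lo a, lo b, lo c => by simp [sup_assoc]
  | lo a, lo b, hi c => by
      simp only [lo_sup_lo, lo_sup_hi, hi_sup_lo, hi_sup_hi, lo_inf_lo, lo_inf_hi, hi_inf_lo, hi_inf_hi]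
      rw [dd_sup_left, dd_dd, inf_comm]
  | lo a, hi b, lo c => by
      simp only [lo_sup_lo, lo_sup_hi, hi_sup_lo, hi_sup_hi, lo_inf_lo, lo_inf_hi, hi_inf_lo, hi_inf_hi]
      rw [dd_dd, dd_dd, inf_comm]
  | hi a, lo b, lo c => by
      simp only [lo_sup_lo, lo_sup_hi, hi_sup_lo, hi_sup_hi, lo_inf_lo, lo_inf_hi, hi_inf_lo, hi_inf_hi]
      rw [dd_dd, dd_sup_left]
  | lo a, hi b, hi c => by
      simp only [lo_sup_lo, lo_sup_hi, hi_sup_lo, hi_sup_hi, lo_inf_lo, lo_inf_hi, hi_inf_lo, hi_inf_hi]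
      rw [dd_inf]
  | hi a, lo b, hi c => by
      simp only [lo_sup_lo, lo_sup_hi, hi_sup_lo, hi_sup_hi, lo_inf_lo, lo_inf_hi, hi_inf_lo, hi_inf_hi]
      rw [← dd_inf, dd_inf']
  | hi a, hi b, lo c => by
      simp only [lo_sup_lo, lo_sup_hi, hi_sup_lo, hi_sup_hi, lo_inf_lo, lo_inf_hi, hi_inf_lo, hi_inf_hi]
      rw [← dd_inf', dd_inf]
  | hi a, hi b, hi c => by simp [inf_assoc]

private lemma ninf_comm : ∀ x y : NN M, x ⊓ y = y ⊓ x
  | lo a, lo b => by simp [inf_comm]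
  | lo a, hi b => rfl
  | hi a, lo b => rfl
  | hi a, hi b => by simp [sup_comm]

private lemma ninf_assoc : ∀ x y z : NN M, x ⊓ y ⊓ z = x ⊓ (y ⊓ z)
  | lo a, lo b, lo c => by simp [inf_assoc]
  | lo a, lo b, hi c => by
      simp only [lo_sup_lo, lo_sup_hi, hi_sup_lo, hi_sup_hi, lo_inf_lo, lo_inf_hi, hi_inf_lo, hi_inf_hi]
      rw [dd_inf']
  | lo a, hi b, lo c => by
      simp only [lo_sup_lo, lo_sup_hi, hi_sup_lo, hi_sup_hi, lo_inf_lo, lo_inf_hi, hi_inf_lo, hi_inf_hi]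
      rw [← dd_inf, dd_inf']
  | lo a, hi b, hi c => by
      simp only [lo_sup_lo, lo_sup_hi, hi_sup_lo, hi_sup_hi, lo_inf_lo, lo_inf_hi, hi_inf_lo, hi_inf_hi]
      rw [dd_dd, dd_sup_left]
  | hi a, lo b, lo c => by
      simp only [lo_sup_lo, lo_sup_hi, hi_sup_lo, hi_sup_hi, lo_inf_lo, lo_inf_hi, hi_inf_lo, hi_inf_hi]
      rw [dd_inf]
  | hi a, lo b, hi c => by
      simp only [lo_sup_lo, lo_sup_hi, hi_sup_lo, hi_sup_hi, lo_inf_lo, lo_inf_hi, hi_inf_lo, hi_inf_hi]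
      rw [dd_dd, dd_dd, inf_comm]
  | hi a, hi b, lo c => by
      simp only [lo_sup_lo, lo_sup_hi, hi_sup_lo, hi_sup_hi, lo_inf_lo, lo_inf_hi, hi_inf_lo, hi_inf_hi]
      rw [dd_sup_left, dd_dd, inf_comm]
  | hi a, hi b, hi c => by simp [sup_assoc]

private lemma nsup_inf_self : ∀ x y : NN M, x ⊔ x ⊓ y = x
  | lo a, lo b => by simp
  | lo a, hi b => by
      simp only [lo_sup_lo, lo_sup_hi, hi_sup_lo, hi_sup_hi, lo_inf_lo, lo_inf_hi, hi_inf_lo, hi_inf_hi]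
      rw [sup_eq_left.2 (dd_le b a)]
  | hi a, lo b => by
      simp only [lo_sup_lo, lo_sup_hi, hi_sup_lo, hi_sup_hi, lo_inf_lo, lo_inf_hi, hi_inf_lo, hi_inf_hi]
      rw [dd_dd_self]
  | hi a, hi b => by simp

private lemma ninf_sup_self : ∀ x y : NN M, x ⊓ (x ⊔ y) = x
  | lo a, lo b => by simp
  | lo a, hi b => by
      simp only [lo_sup_lo, lo_sup_hi, hi_sup_lo, hi_sup_hi, lo_inf_lo, lo_inf_hi, hi_inf_lo, hi_inf_hi]
      rw [dd_dd_self]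
  | hi a, lo b => by
      simp only [lo_sup_lo, lo_sup_hi, hi_sup_lo, hi_sup_hi, lo_inf_lo, lo_inf_hi, hi_inf_lo, hi_inf_hi]
      rw [sup_eq_left.2 (dd_le b a)]
  | hi a, hi b => by simp

instance instLattice : Lattice (NN M) :=
  Lattice.mk' nsup_comm nsup_assoc ninf_comm ninf_assoc nsup_inf_self ninf_sup_self

private lemma ninf_sup_le : ∀ x y z : NN M, x ⊓ (y ⊔ z) ≤ x ⊓ y ⊔ x ⊓ z
  | lo a, lo b, lo c => by
      simp only [lo_sup_lo, lo_sup_hi, hi_sup_lo, hi_sup_hi, lo_inf_lo, lo_inf_hi, hi_inf_lo, hi_inf_hi]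
      exact le_of_eq (by rw [inf_sup_left])
  | lo a, lo b, hi c => by
      simp only [lo_sup_lo, lo_sup_hi, hi_sup_lo, hi_sup_hi, lo_inf_lo, lo_inf_hi, hi_inf_lo, hi_inf_hi]
      exact le_of_eq (by rw [dd_first])
  | lo a, hi b, lo c => by
      simp only [lo_sup_lo, lo_sup_hi, hi_sup_lo, hi_sup_hi, lo_inf_lo, lo_inf_hi, hi_inf_lo, hi_inf_hi]
      exact le_of_eq (by rw [dd_first, sup_comm])
  | lo a, hi b, hi c => by
      simp only [lo_sup_lo, lo_sup_hi, hi_sup_lo, hi_sup_hi, lo_inf_lo, lo_inf_hi, hi_inf_lo, hi_inf_hi]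
      exact le_of_eq (by rw [dd_inf_left])
  | hi a, lo b, lo c => by
      simp only [lo_sup_lo, lo_sup_hi, hi_sup_lo, hi_sup_hi, lo_inf_lo, lo_inf_hi, hi_inf_lo, hi_inf_hi]
      exact le_of_eq (by rw [dd_sup_right])
  | hi a, lo b, hi c => by
      simp only [lo_sup_lo, lo_sup_hi, hi_sup_lo, hi_sup_hi, lo_inf_lo, lo_inf_hi, hi_inf_lo, hi_inf_hi]
      have : dd (dd a b) (a ⊔ c) = a ⊔ dd b c := by
        rw [dd_first, dd_sup_right]
        rw [inf_comm (a ⊔ c) a, inf_eq_left.2 (le_sup_left : a ≤ a ⊔ c)]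
        rw [← sup_assoc, sup_eq_left.2 (dd_le b a)]
      exact le_of_eq (by rw [this])
  | hi a, hi b, lo c => by
      simp only [lo_sup_lo, lo_sup_hi, hi_sup_lo, hi_sup_hi, lo_inf_lo, lo_inf_hi, hi_inf_lo, hi_inf_hi]
      have : dd (dd a c) (a ⊔ b) = a ⊔ dd c b := by
        rw [dd_first, dd_sup_right]
        rw [inf_comm (a ⊔ b) a, inf_eq_left.2 (le_sup_left : a ≤ a ⊔ b)]
        rw [← sup_assoc, sup_eq_left.2 (dd_le c a)]
      exact le_of_eq (by rw [this])
  | hi a, hi b, hi c => by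
      simp only [lo_sup_lo, lo_sup_hi, hi_sup_lo, hi_sup_hi, lo_inf_lo, lo_inf_hi, hi_inf_lo, hi_inf_hi]
      exact le_of_eq (by rw [sup_inf_left])

instance instDistribLattice : DistribLattice (NN M) :=
  DistribLattice.ofInfSupLe ninf_sup_le

lemma lo_le_lo {a b : M} : (lo a : NN M) ≤ lo b ↔ a ≤ b := by
  rw [← sup_eq_right, lo_sup_lo]
  constructor
  · intro h; injection h with h'; exact sup_eq_right.1 h'
  · intro h; rw [sup_eq_right.2 h]

lemma hi_le_hi {a b : M} : (hi a : NN M) ≤ hi b ↔ b ≤ a := by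
  rw [← sup_eq_right, hi_sup_hi]
  constructor
  · intro h; injection h with h'; exact inf_eq_right.1 h'
  · intro h; rw [inf_eq_right.2 h]

lemma lo_le_hi {a b : M} : (lo a : NN M) ≤ hi b ↔ dd a b = b := by
  rw [← sup_eq_right, lo_sup_hi]
  constructor
  · intro h; injection h
  · intro h; rw [h]

lemma not_hi_le_lo {a b : M} : ¬ ((hi a : NN M) ≤ lo b) := by
  rw [← sup_eq_right, hi_sup_lo]
  intro h; cases h


@[simp] lemma lo_plus_lo (a b : M) : nplus (lo a) (lo b) = lo (oplus a b) := rfl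
@[simp] lemma lo_plus_hi (a b : M) : nplus (lo a) (hi b) = hi (ominus b a) := rfl
@[simp] lemma hi_plus_lo (a b : M) : nplus (hi a) (lo b) = hi (ominus a b) := rfl
@[simp] lemma hi_plus_hi (a b : M) : nplus (hi a) (hi b) = hi (rr a b) := rfl
@[simp] lemma lo_minus_lo (a b : M) : nminus (lo a) (lo b) = lo (ominus a b) := rfl
@[simp] lemma lo_minus_hi (a b : M) : nminus (lo a) (hi b) = lo (rr a b) := rfl
@[simp] lemma hi_minus_lo (a b : M) : nminus (hi a) (lo b) = hi (oplus a b) := rfl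
@[simp] lemma hi_minus_hi (a b : M) : nminus (hi a) (hi b) = lo (ominus b a) := rfl

private lemma noplus_comm : ∀ x y : NN M, nplus x y = nplus y x
  | lo a, lo b => by simp [WEMV.oplus_comm a b]
  | lo a, hi b => rfl
  | hi a, lo b => rfl
  | hi a, hi b => by simp [rr_comm a b]

private lemma noplus_assoc : ∀ x y z : NN M, nplus (nplus x y) z = nplus x (nplus y z)
  | lo a, lo b, lo c => by simp [oplus_assoc]
  | lo a, lo b, hi c => by
      simp only [lo_plus_lo, lo_plus_hi, hi_plus_lo, hi_plus_hi, lo_minus_lo, lo_minus_hi, hi_minus_lo, hi_minus_hi, lo_sup_lo, lo_sup_hi, hi_sup_lo, hi_sup_hi, lo_inf_lo, lo_inf_hi, hi_inf_lo, hi_inf_hi]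
      rw [oplus_comm a b, ominus_oplus_assoc]
  | lo a, hi b, lo c => by
      simp only [lo_plus_lo, lo_plus_hi, hi_plus_lo, hi_plus_hi, lo_minus_lo, lo_minus_hi, hi_minus_lo, hi_minus_hi, lo_sup_lo, lo_sup_hi, hi_sup_lo, hi_sup_hi, lo_inf_lo, lo_inf_hi, hi_inf_lo, hi_inf_hi]
      rw [← ominus_oplus_assoc, ← ominus_oplus_assoc, oplus_comm]
  | hi a, lo b, lo c => by
      simp only [lo_plus_lo, lo_plus_hi, hi_plus_lo, hi_plus_hi, lo_minus_lo, lo_minus_hi, hi_minus_lo, hi_minus_hi, lo_sup_lo, lo_sup_hi, hi_sup_lo, hi_sup_hi, lo_inf_lo, lo_inf_hi, hi_inf_lo, hi_inf_hi]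
      rw [ominus_oplus_assoc]
  | lo a, hi b, hi c => by
      simp only [lo_plus_lo, lo_plus_hi, hi_plus_lo, hi_plus_hi, lo_minus_lo, lo_minus_hi, hi_minus_lo, hi_minus_hi, lo_sup_lo, lo_sup_hi, hi_sup_lo, hi_sup_hi, lo_inf_lo, lo_inf_hi, hi_inf_lo, hi_inf_hi]
      rw [rr_ominus]
  | hi a, lo b, hi c => by
      simp only [lo_plus_lo, lo_plus_hi, hi_plus_lo, hi_plus_hi, lo_minus_lo, lo_minus_hi, hi_minus_lo, hi_minus_hi, lo_sup_lo, lo_sup_hi, hi_sup_lo, hi_sup_hi, lo_inf_lo, lo_inf_hi, hi_inf_lo, hi_inf_hi]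
      rw [rr_ominus']
  | hi a, hi b, lo c => by
      simp only [lo_plus_lo, lo_plus_hi, hi_plus_lo, hi_plus_hi, lo_minus_lo, lo_minus_hi, hi_minus_lo, hi_minus_hi, lo_sup_lo, lo_sup_hi, hi_sup_lo, hi_sup_hi, lo_inf_lo, lo_inf_hi, hi_inf_lo, hi_inf_hi]
      rw [rr_comm a (ominus b c), rr_ominus c b a, rr_comm b a]
  | hi a, hi b, hi c => by
      simp only [lo_plus_lo, lo_plus_hi, hi_plus_lo, hi_plus_hi, lo_minus_lo, lo_minus_hi, hi_minus_lo, hi_minus_hi, lo_sup_lo, lo_sup_hi, hi_sup_lo, hi_sup_hi, lo_inf_lo, lo_inf_hi, hi_inf_lo, hi_inf_hi]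
      rw [rr_assoc]

private lemma noplus_zero : ∀ x : NN M, nplus x (lo 0) = x
  | lo a => by simp [WEMV.oplus_zero]
  | hi a => by simp [ominus_zero]

instance instZero : Zero (NN M) := ⟨lo 0⟩

private lemma nzero_le : ∀ x : NN M, (lo 0 : NN M) ≤ x
  | lo a => lo_le_lo.2 (WEMV.zero_le a)
  | hi a => lo_le_hi.2 (dd_zero_left a)

private lemma nominus_oplus_le : ∀ x y : NN M, nminus (nplus x y) x ≤ y
  | lo a, lo b => by
      simp only [lo_plus_lo, lo_plus_hi, hi_plus_lo, hi_plus_hi, lo_minus_lo, lo_minus_hi, hi_minus_lo, hi_minus_hi, lo_sup_lo, lo_sup_hi, hi_sup_lo, hi_sup_hi, lo_inf_lo, lo_inf_hi, hi_inf_lo, hi_inf_hi]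
      exact lo_le_lo.2 (WEMV.ominus_oplus_le a b)
  | lo a, hi b => by
      simp only [lo_plus_lo, lo_plus_hi, hi_plus_lo, hi_plus_hi, lo_minus_lo, lo_minus_hi, hi_minus_lo, hi_minus_hi, lo_sup_lo, lo_sup_hi, hi_sup_lo, hi_sup_hi, lo_inf_lo, lo_inf_hi, hi_inf_lo, hi_inf_hi]
      apply hi_le_hi.2
      calc b ≤ a ⊔ b := le_sup_right
      _ = oplus a (ominus b a) := (oplus_ominus a b).symm
      _ = oplus (ominus b a) a := oplus_comm _ _
  | hi a, lo b => by
      simp only [lo_plus_lo, lo_plus_hi, hi_plus_lo, hi_plus_hi, lo_minus_lo, lo_minus_hi, hi_minus_lo, hi_minus_hi, lo_sup_lo, lo_sup_hi, hi_sup_lo, hi_sup_hi, lo_inf_lo, lo_inf_hi, hi_inf_lo, hi_inf_hi]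
      rw [ominus_ominus]
      exact lo_le_lo.2 inf_le_left
  | hi a, hi b => by
      simp only [lo_plus_lo, lo_plus_hi, hi_plus_lo, hi_plus_hi, lo_minus_lo, lo_minus_hi, hi_minus_lo, hi_minus_hi, lo_sup_lo, lo_sup_hi, hi_sup_lo, hi_sup_hi, lo_inf_lo, lo_inf_hi, hi_inf_lo, hi_inf_hi]
      rw [ominus_rr]
      apply lo_le_hi.2
      rw [dd_first, inf_idem]
      exact sup_eq_left.2 (dd_le a b)

private lemma noplus_ominus : ∀ x y : NN M, nplus x (nminus y x) = x ⊔ y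
  | lo a, lo b => by
      simp only [lo_plus_lo, lo_plus_hi, hi_plus_lo, hi_plus_hi, lo_minus_lo, lo_minus_hi, hi_minus_lo, hi_minus_hi, lo_sup_lo, lo_sup_hi, hi_sup_lo, hi_sup_hi, lo_inf_lo, lo_inf_hi, hi_inf_lo, hi_inf_hi]
      rw [oplus_ominus]
  | lo a, hi b => rfl
  | hi a, lo b => by
      simp only [lo_plus_lo, lo_plus_hi, hi_plus_lo, hi_plus_hi, lo_minus_lo, lo_minus_hi, hi_minus_lo, hi_minus_hi, lo_sup_lo, lo_sup_hi, hi_sup_lo, hi_sup_hi, lo_inf_lo, lo_inf_hi, hi_inf_lo, hi_inf_hi]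
      rw [rr_comm, ominus_rr]
  | hi a, hi b => by
      simp only [lo_plus_lo, lo_plus_hi, hi_plus_lo, hi_plus_hi, lo_minus_lo, lo_minus_hi, hi_minus_lo, hi_minus_hi, lo_sup_lo, lo_sup_hi, hi_sup_lo, hi_sup_hi, lo_inf_lo, lo_inf_hi, hi_inf_lo, hi_inf_hi]
      rw [ominus_ominus, inf_comm]

private lemma nominus_inf : ∀ x y : NN M, nminus x (x ⊓ y) = nminus x y
  | lo a, lo b => by
      simp only [lo_plus_lo, lo_plus_hi, hi_plus_lo, hi_plus_hi, lo_minus_lo, lo_minus_hi, hi_minus_lo, hi_minus_hi, lo_sup_lo, lo_sup_hi, hi_sup_lo, hi_sup_hi, lo_inf_lo, lo_inf_hi, hi_inf_lo, hi_inf_hi]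
      rw [ominus_inf]
  | lo a, hi b => rfl
  | hi a, lo b => by
      simp only [lo_plus_lo, lo_plus_hi, hi_plus_lo, hi_plus_hi, lo_minus_lo, lo_minus_hi, hi_minus_lo, hi_minus_hi, lo_sup_lo, lo_sup_hi, hi_sup_lo, hi_sup_hi, lo_inf_lo, lo_inf_hi, hi_inf_lo, hi_inf_hi]
      rw [oplus_dd]
  | hi a, hi b => by
      simp only [lo_plus_lo, lo_plus_hi, hi_plus_lo, hi_plus_hi, lo_minus_lo, lo_minus_hi, hi_minus_lo, hi_minus_hi, lo_sup_lo, lo_sup_hi, hi_sup_lo, hi_sup_hi, lo_inf_lo, lo_inf_hi, hi_inf_lo, hi_inf_hi]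
      rw [sup_ominus, ominus_self]
      exact congrArg lo (sup_eq_right.2 (WEMV.zero_le _))

private lemma nominus_ominus : ∀ x z : NN M, nminus z (nminus z x) = x ⊓ z
  | lo b, lo a => by
      simp only [lo_plus_lo, lo_plus_hi, hi_plus_lo, hi_plus_hi, lo_minus_lo, lo_minus_hi, hi_minus_lo, hi_minus_hi, lo_sup_lo, lo_sup_hi, hi_sup_lo, hi_sup_hi, lo_inf_lo, lo_inf_hi, hi_inf_lo, hi_inf_hi]
      rw [ominus_ominus]
  | hi b, lo a => by
      simp only [lo_plus_lo, lo_plus_hi, hi_plus_lo, hi_plus_hi, lo_minus_lo, lo_minus_hi, hi_minus_lo, hi_minus_hi, lo_sup_lo, lo_sup_hi, hi_sup_lo, hi_sup_hi, lo_inf_lo, lo_inf_hi, hi_inf_lo, hi_inf_hi]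
      rw [ominus_rr]
  | lo b, hi a => by
      simp only [lo_plus_lo, lo_plus_hi, hi_plus_lo, hi_plus_hi, lo_minus_lo, lo_minus_hi, hi_minus_lo, hi_minus_hi, lo_sup_lo, lo_sup_hi, hi_sup_lo, hi_sup_hi, lo_inf_lo, lo_inf_hi, hi_inf_lo, hi_inf_hi]
      rw [oplus_comm]
      rfl
  | hi b, hi a => by
      simp only [lo_plus_lo, lo_plus_hi, hi_plus_lo, hi_plus_hi, lo_minus_lo, lo_minus_hi, hi_minus_lo, hi_minus_hi, lo_sup_lo, lo_sup_hi, hi_sup_lo, hi_sup_hi, lo_inf_lo, lo_inf_hi, hi_inf_lo, hi_inf_hi]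
      rw [oplus_ominus, sup_comm]

private lemma nominus_sup : ∀ x y z : NN M, nminus z (x ⊔ y) = nminus z x ⊓ nminus z y
  | lo b, lo c, lo a => by
      simp only [lo_plus_lo, lo_plus_hi, hi_plus_lo, hi_plus_hi, lo_minus_lo, lo_minus_hi, hi_minus_lo, hi_minus_hi, lo_sup_lo, lo_sup_hi, hi_sup_lo, hi_sup_hi, lo_inf_lo, lo_inf_hi, hi_inf_lo, hi_inf_hi]
      rw [ominus_sup]
  | lo b, hi c, lo a => by
      simp only [lo_plus_lo, lo_plus_hi, hi_plus_lo, hi_plus_hi, lo_minus_lo, lo_minus_hi, hi_minus_lo, hi_minus_hi, lo_sup_lo, lo_sup_hi, hi_sup_lo, hi_sup_hi, lo_inf_lo, lo_inf_hi, hi_inf_lo, hi_inf_hi]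
      rw [rr_dd]
  | hi b, lo c, lo a => by
      simp only [lo_plus_lo, lo_plus_hi, hi_plus_lo, hi_plus_hi, lo_minus_lo, lo_minus_hi, hi_minus_lo, hi_minus_hi, lo_sup_lo, lo_sup_hi, hi_sup_lo, hi_sup_hi, lo_inf_lo, lo_inf_hi, hi_inf_lo, hi_inf_hi]
      rw [rr_dd, inf_comm]
  | hi b, hi c, lo a => by
      simp only [lo_plus_lo, lo_plus_hi, hi_plus_lo, hi_plus_hi, lo_minus_lo, lo_minus_hi, hi_minus_lo, hi_minus_hi, lo_sup_lo, lo_sup_hi, hi_sup_lo, hi_sup_hi, lo_inf_lo, lo_inf_hi, hi_inf_lo, hi_inf_hi]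
      rw [rr_inf]
  | lo b, lo c, hi a => by
      simp only [lo_plus_lo, lo_plus_hi, hi_plus_lo, hi_plus_hi, lo_minus_lo, lo_minus_hi, hi_minus_lo, hi_minus_hi, lo_sup_lo, lo_sup_hi, hi_sup_lo, hi_sup_hi, lo_inf_lo, lo_inf_hi, hi_inf_lo, hi_inf_hi]
      rw [oplus_sup]
  | lo b, hi c, hi a => by
      simp only [lo_plus_lo, lo_plus_hi, hi_plus_lo, hi_plus_hi, lo_minus_lo, lo_minus_hi, hi_minus_lo, hi_minus_hi, lo_sup_lo, lo_sup_hi, hi_sup_lo, hi_sup_hi, lo_inf_lo, lo_inf_hi, hi_inf_lo, hi_inf_hi]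
      rw [dd_ominus]
  | hi b, lo c, hi a => by
      simp only [lo_plus_lo, lo_plus_hi, hi_plus_lo, hi_plus_hi, lo_minus_lo, lo_minus_hi, hi_minus_lo, hi_minus_hi, lo_sup_lo, lo_sup_hi, hi_sup_lo, hi_sup_hi, lo_inf_lo, lo_inf_hi, hi_inf_lo, hi_inf_hi]
      rw [dd_ominus]
  | hi b, hi c, hi a => by
      simp only [lo_plus_lo, lo_plus_hi, hi_plus_lo, hi_plus_hi, lo_minus_lo, lo_minus_hi, hi_minus_lo, hi_minus_hi, lo_sup_lo, lo_sup_hi, hi_sup_lo, hi_sup_hi, lo_inf_lo, lo_inf_hi, hi_inf_lo, hi_inf_hi]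
      rw [inf_ominus]

private lemma ninf_ominus : ∀ x y z : NN M, nminus (x ⊓ y) z = nminus x z ⊓ nminus y z
  | lo a, lo b, lo c => by
      simp only [lo_plus_lo, lo_plus_hi, hi_plus_lo, hi_plus_hi, lo_minus_lo, lo_minus_hi, hi_minus_lo, hi_minus_hi, lo_sup_lo, lo_sup_hi, hi_sup_lo, hi_sup_hi, lo_inf_lo, lo_inf_hi, hi_inf_lo, hi_inf_hi]
      rw [inf_ominus]
  | lo a, lo b, hi c => by
      simp only [lo_plus_lo, lo_plus_hi, hi_plus_lo, hi_plus_hi, lo_minus_lo, lo_minus_hi, hi_minus_lo, hi_minus_hi, lo_sup_lo, lo_sup_hi, hi_sup_lo, hi_sup_hi, lo_inf_lo, lo_inf_hi, hi_inf_lo, hi_inf_hi]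
      rw [rr_comm, rr_inf, rr_comm c a, rr_comm c b]
  | lo a, hi b, lo c => by
      simp only [lo_plus_lo, lo_plus_hi, hi_plus_lo, hi_plus_hi, lo_minus_lo, lo_minus_hi, hi_minus_lo, hi_minus_hi, lo_sup_lo, lo_sup_hi, hi_sup_lo, hi_sup_hi, lo_inf_lo, lo_inf_hi, hi_inf_lo, hi_inf_hi]
      rw [oplus_comm b c, dd_ominus]
  | lo a, hi b, hi c => by
      simp only [lo_plus_lo, lo_plus_hi, hi_plus_lo, hi_plus_hi, lo_minus_lo, lo_minus_hi, hi_minus_lo, hi_minus_hi, lo_sup_lo, lo_sup_hi, hi_sup_lo, hi_sup_hi, lo_inf_lo, lo_inf_hi, hi_inf_lo, hi_inf_hi]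
      rw [rr_comm, rr_dd, rr_comm c a, inf_comm]
  | hi a, lo b, lo c => by
      simp only [lo_plus_lo, lo_plus_hi, hi_plus_lo, hi_plus_hi, lo_minus_lo, lo_minus_hi, hi_minus_lo, hi_minus_hi, lo_sup_lo, lo_sup_hi, hi_sup_lo, hi_sup_hi, lo_inf_lo, lo_inf_hi, hi_inf_lo, hi_inf_hi]
      rw [oplus_comm a c, dd_ominus]
  | hi a, lo b, hi c => by
      simp only [lo_plus_lo, lo_plus_hi, hi_plus_lo, hi_plus_hi, lo_minus_lo, lo_minus_hi, hi_minus_lo, hi_minus_hi, lo_sup_lo, lo_sup_hi, hi_sup_lo, hi_sup_hi, lo_inf_lo, lo_inf_hi, hi_inf_lo, hi_inf_hi]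
      rw [rr_comm, rr_dd, rr_comm c b]
  | hi a, hi b, lo c => by
      simp only [lo_plus_lo, lo_plus_hi, hi_plus_lo, hi_plus_hi, lo_minus_lo, lo_minus_hi, hi_minus_lo, hi_minus_hi, lo_sup_lo, lo_sup_hi, hi_sup_lo, hi_sup_hi, lo_inf_lo, lo_inf_hi, hi_inf_lo, hi_inf_hi]
      rw [oplus_comm (a ⊔ b) c, oplus_sup, oplus_comm c a, oplus_comm c b]
  | hi a, hi b, hi c => by
      simp only [lo_plus_lo, lo_plus_hi, hi_plus_lo, hi_plus_hi, lo_minus_lo, lo_minus_hi, hi_minus_lo, hi_minus_hi, lo_sup_lo, lo_sup_hi, hi_sup_lo, hi_sup_hi, lo_inf_lo, lo_inf_hi, hi_inf_lo, hi_inf_hi]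
      rw [ominus_sup]

private lemma nominus_oplus_assoc : ∀ x y z : NN M, nminus x (nplus y z) = nminus (nminus x y) z
  | lo a, lo b, lo c => by
      simp only [lo_plus_lo, lo_plus_hi, hi_plus_lo, hi_plus_hi, lo_minus_lo, lo_minus_hi, hi_minus_lo, hi_minus_hi, lo_sup_lo, lo_sup_hi, hi_sup_lo, hi_sup_hi, lo_inf_lo, lo_inf_hi, hi_inf_lo, hi_inf_hi]
      rw [ominus_oplus_assoc]
  | lo a, lo b, hi c => by
      simp only [lo_plus_lo, lo_plus_hi, hi_plus_lo, hi_plus_hi, lo_minus_lo, lo_minus_hi, hi_minus_lo, hi_minus_hi, lo_sup_lo, lo_sup_hi, hi_sup_lo, hi_sup_hi, lo_inf_lo, lo_inf_hi, hi_inf_lo, hi_inf_hi]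
      rw [rr_ominus']
  | lo a, hi b, lo c => by
      simp only [lo_plus_lo, lo_plus_hi, hi_plus_lo, hi_plus_hi, lo_minus_lo, lo_minus_hi, hi_minus_lo, hi_minus_hi, lo_sup_lo, lo_sup_hi, hi_sup_lo, hi_sup_hi, lo_inf_lo, lo_inf_hi, hi_inf_lo, hi_inf_hi]
      rw [rr_comm a (ominus b c), rr_ominus c b a, rr_comm b a]
  | lo a, hi b, hi c => by
      simp only [lo_plus_lo, lo_plus_hi, hi_plus_lo, hi_plus_hi, lo_minus_lo, lo_minus_hi, hi_minus_lo, hi_minus_hi, lo_sup_lo, lo_sup_hi, hi_sup_lo, hi_sup_hi, lo_inf_lo, lo_inf_hi, hi_inf_lo, hi_inf_hi]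
      rw [rr_assoc]
  | hi a, lo b, lo c => by
      simp only [lo_plus_lo, lo_plus_hi, hi_plus_lo, hi_plus_hi, lo_minus_lo, lo_minus_hi, hi_minus_lo, hi_minus_hi, lo_sup_lo, lo_sup_hi, hi_sup_lo, hi_sup_hi, lo_inf_lo, lo_inf_hi, hi_inf_lo, hi_inf_hi]
      rw [oplus_assoc]
  | hi a, lo b, hi c => by
      simp only [lo_plus_lo, lo_plus_hi, hi_plus_lo, hi_plus_hi, lo_minus_lo, lo_minus_hi, hi_minus_lo, hi_minus_hi, lo_sup_lo, lo_sup_hi, hi_sup_lo, hi_sup_hi, lo_inf_lo, lo_inf_hi, hi_inf_lo, hi_inf_hi]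
      rw [oplus_comm a b, ominus_oplus_assoc]
  | hi a, hi b, lo c => by
      simp only [lo_plus_lo, lo_plus_hi, hi_plus_lo, hi_plus_hi, lo_minus_lo, lo_minus_hi, hi_minus_lo, hi_minus_hi, lo_sup_lo, lo_sup_hi, hi_sup_lo, hi_sup_hi, lo_inf_lo, lo_inf_hi, hi_inf_lo, hi_inf_hi]
      rw [← ominus_oplus_assoc, ← ominus_oplus_assoc, oplus_comm]
  | hi a, hi b, hi c => by
      simp only [lo_plus_lo, lo_plus_hi, hi_plus_lo, hi_plus_hi, lo_minus_lo, lo_minus_hi, hi_minus_lo, hi_minus_hi, lo_sup_lo, lo_sup_hi, hi_sup_lo, hi_sup_hi, lo_inf_lo, lo_inf_hi, hi_inf_lo, hi_inf_hi]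
      rw [rr_ominus]

private lemma noplus_sup : ∀ x y z : NN M, nplus x (y ⊔ z) = nplus x y ⊔ nplus x z
  | lo a, lo b, lo c => by
      simp only [lo_plus_lo, lo_plus_hi, hi_plus_lo, hi_plus_hi, lo_minus_lo, lo_minus_hi, hi_minus_lo, hi_minus_hi, lo_sup_lo, lo_sup_hi, hi_sup_lo, hi_sup_hi, lo_inf_lo, lo_inf_hi, hi_inf_lo, hi_inf_hi]
      rw [oplus_sup]
  | lo a, lo b, hi c => by
      simp only [lo_plus_lo, lo_plus_hi, hi_plus_lo, hi_plus_hi, lo_minus_lo, lo_minus_hi, hi_minus_lo, hi_minus_hi, lo_sup_lo, lo_sup_hi, hi_sup_lo, hi_sup_hi, lo_inf_lo, lo_inf_hi, hi_inf_lo, hi_inf_hi]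
      rw [dd_ominus]
  | lo a, hi b, lo c => by
      simp only [lo_plus_lo, lo_plus_hi, hi_plus_lo, hi_plus_hi, lo_minus_lo, lo_minus_hi, hi_minus_lo, hi_minus_hi, lo_sup_lo, lo_sup_hi, hi_sup_lo, hi_sup_hi, lo_inf_lo, lo_inf_hi, hi_inf_lo, hi_inf_hi]
      rw [dd_ominus]
  | lo a, hi b, hi c => by
      simp only [lo_plus_lo, lo_plus_hi, hi_plus_lo, hi_plus_hi, lo_minus_lo, lo_minus_hi, hi_minus_lo, hi_minus_hi, lo_sup_lo, lo_sup_hi, hi_sup_lo, hi_sup_hi, lo_inf_lo, lo_inf_hi, hi_inf_lo, hi_inf_hi]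
      rw [inf_ominus]
  | hi a, lo b, lo c => by
      simp only [lo_plus_lo, lo_plus_hi, hi_plus_lo, hi_plus_hi, lo_minus_lo, lo_minus_hi, hi_minus_lo, hi_minus_hi, lo_sup_lo, lo_sup_hi, hi_sup_lo, hi_sup_hi, lo_inf_lo, lo_inf_hi, hi_inf_lo, hi_inf_hi]
      rw [ominus_sup]
  | hi a, lo b, hi c => by
      simp only [lo_plus_lo, lo_plus_hi, hi_plus_lo, hi_plus_hi, lo_minus_lo, lo_minus_hi, hi_minus_lo, hi_minus_hi, lo_sup_lo, lo_sup_hi, hi_sup_lo, hi_sup_hi, lo_inf_lo, lo_inf_hi, hi_inf_lo, hi_inf_hi]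
      rw [rr_dd]
  | hi a, hi b, lo c => by
      simp only [lo_plus_lo, lo_plus_hi, hi_plus_lo, hi_plus_hi, lo_minus_lo, lo_minus_hi, hi_minus_lo, hi_minus_hi, lo_sup_lo, lo_sup_hi, hi_sup_lo, hi_sup_hi, lo_inf_lo, lo_inf_hi, hi_inf_lo, hi_inf_hi]
      rw [rr_dd, inf_comm]
  | hi a, hi b, hi c => by
      simp only [lo_plus_lo, lo_plus_hi, hi_plus_lo, hi_plus_hi, lo_minus_lo, lo_minus_hi, hi_minus_lo, hi_minus_hi, lo_sup_lo, lo_sup_hi, hi_sup_lo, hi_sup_hi, lo_inf_lo, lo_inf_hi, hi_inf_lo, hi_inf_hi]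
      rw [rr_inf]

instance instWEMV : WEMV (NN M) where
  toDistribLattice := instDistribLattice
  zero := lo 0
  oplus := nplus
  ominus := nminus
  zero_le := nzero_le
  oplus_comm := noplus_comm
  oplus_assoc := noplus_assoc
  oplus_zero := noplus_zero
  ominus_oplus_le := nominus_oplus_le
  oplus_ominus := noplus_ominus
  ominus_inf := nominus_inf
  ominus_ominus := nominus_ominus
  ominus_sup := nominus_sup
  inf_ominus := ninf_ominus
  ominus_oplus_assoc := nominus_oplus_assoc
  oplus_sup := noplus_sup

lemma hi_zero_greatest : ∀ y : NN M, y ≤ hi 0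
  | lo a => lo_le_hi.2 (dd_zero_right a)
  | hi a => hi_le_hi.2 (WEMV.zero_le a)

end NN

end WEMVAux

theorem stmt19 (M : Type u) [WEMV M] (hnotop : ¬ ∃ t : M, ∀ x : M, x ≤ t) :
    ∃ (N : Type u) (instN : WEMV N) (f : M → N) (one : N),
      @IsGreatestElt N instN one ∧
      @IsWEMVEmbedding M _ N instN f ∧
      @IsMaximalIdeal N instN (Set.range f) ∧
      ∀ n : N, (∃ x : M, f x = n) ∨ ∃ x : M, n = ominus one (f x) := by
  classical
  refine ⟨WEMVAux.NN M, WEMVAux.NN.instWEMV, WEMVAux.NN.lo, WEMVAux.NN.hi 0, ?_, ?_, ?_, ?_⟩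
  · exact WEMVAux.NN.hi_zero_greatest
  · refine ⟨?_, rfl, fun x y => rfl, fun x y => rfl, fun x y => rfl, fun x y => rfl⟩
    intro a b h
    injection h
  · refine ⟨⟨⟨WEMVAux.NN.lo 0, 0, rfl⟩, ?_, ?_⟩, ?_, ?_⟩
    · rintro x y hle ⟨a, rfl⟩
      cases y with
      | lo b => exact ⟨b, rfl⟩
      | hi b => exact absurd hle WEMVAux.NN.not_hi_le_lo
    · rintro x ⟨a, rfl⟩ y ⟨b, rfl⟩
      exact ⟨oplus a b, rfl⟩
    · intro h
      have h1 : WEMVAux.NN.hi (0 : M) ∈ Set.range (WEMVAux.NN.lo (M := M)) := by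
        rw [h]; exact Set.mem_univ _
      obtain ⟨a, ha⟩ := h1
      cases ha
    · intro J hJ hJne hsub
      refine Set.Subset.antisymm hsub ?_
      intro j hj
      cases j with
      | lo b => exact ⟨b, rfl⟩
      | hi b =>
        exfalso
        apply hJne
        have h1 : oplus (WEMVAux.NN.hi b) (WEMVAux.NN.lo b) ∈ J :=
          hJ.2.2 _ hj _ (hsub ⟨b, rfl⟩)
        have h2 : oplus (WEMVAux.NN.hi b) (WEMVAux.NN.lo b) = WEMVAux.NN.hi (0 : M) := by
          show WEMVAux.NN.hi (ominus b b) = WEMVAux.NN.hi (0 : M)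
          rw [WEMVAux.ominus_self]
        rw [h2] at h1
        apply Set.eq_univ_of_forall
        intro n
        exact hJ.2.1 _ n (WEMVAux.NN.hi_zero_greatest n) h1
  · intro n
    cases n with
    | lo x => exact Or.inl ⟨x, rfl⟩
    | hi x =>
      refine Or.inr ⟨x, ?_⟩
      show WEMVAux.NN.hi x = WEMVAux.NN.hi (oplus 0 x)
      rw [WEMVAux.zero_oplus]
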